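/- Let {A, S, Π} be an S-node with S boundedly invertible, and let z ∈ ℂ be such that I − zA* is boundedly invertible (hence so is I − z̄A = (I − zA*)*). Then ρ(z, z̄) = 𝔄_{21}(S,z)·𝔄_{22}(S,z)* + 𝔄_{22}(S,z)·𝔄_{21}(S,z)*. -/

import Mathlib

open Matrix MeasureTheory ContinuousLinearMap
open scoped ComplexOrder

noncomputable section

/-- The matrix (in the standard basis) of a continuous linear operator on `ℂ^p`. -/
def opToMat {p : ℕ} (T : EuclideanSpace ℂ (Fin p) →L[ℂ] EuclideanSpace ℂ (Fin p)) :
    Matrix (Fin p) (Fin p) ℂ :=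
  (Matrix.toEuclideanCLM (𝕜 := ℂ) (n := Fin p)).symm T

/-- The `2p × 2p` matrix `Π^* B Π` with blocks `Φ_i^* B Φ_j`, for `Π = [Φ₁ Φ₂]`. -/
def sandwich {p : ℕ} {H : Type*} [NormedAddCommGroup H] [InnerProductSpace ℂ H]
    [CompleteSpace H] (B : H →L[ℂ] H) (Φ₁ Φ₂ : EuclideanSpace ℂ (Fin p) →L[ℂ] H) :
    Matrix (Fin p ⊕ Fin p) (Fin p ⊕ Fin p) ℂ :=
  Matrix.fromBlocks
    (opToMat (adjoint Φ₁ ∘L B ∘L Φ₁)) (opToMat (adjoint Φ₁ ∘L B ∘L Φ₂))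
    (opToMat (adjoint Φ₂ ∘L B ∘L Φ₁)) (opToMat (adjoint Φ₂ ∘L B ∘L Φ₂))

/-- The frame `𝔄(S,z) = I_{2p} - i z Π^* (I - z A^*)⁻¹ S⁻¹ Π J` of an `S`-node,
identified with a `2p × 2p` complex matrix. -/
def frameS {p : ℕ} {H : Type*} [NormedAddCommGroup H] [InnerProductSpace ℂ H]
    [CompleteSpace H] (A S : H →L[ℂ] H) (Φ₁ Φ₂ : EuclideanSpace ℂ (Fin p) →L[ℂ] H)
    (z : ℂ) : Matrix (Fin p ⊕ Fin p) (Fin p ⊕ Fin p) ℂ :=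
  1 - (Complex.I * z) •
    (sandwich (Ring.inverse (1 - z • adjoint A) ∘L Ring.inverse S) Φ₁ Φ₂ *
      Matrix.fromBlocks 0 1 1 0)

/-- The `p × p` matrix `ρ(z,w) = i (w - z) Φ₂^* (I - z A^*)⁻¹ S⁻¹ (I - w A)⁻¹ Φ₂`. -/
def rhoS {p : ℕ} {H : Type*} [NormedAddCommGroup H] [InnerProductSpace ℂ H]
    [CompleteSpace H] (A S : H →L[ℂ] H) (Φ₂ : EuclideanSpace ℂ (Fin p) →L[ℂ] H)
    (z w : ℂ) : Matrix (Fin p) (Fin p) ℂ :=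
  (Complex.I * (w - z)) • opToMat (adjoint Φ₂ ∘L Ring.inverse (1 - z • adjoint A) ∘L
    Ring.inverse S ∘L Ring.inverse (1 - w • A) ∘L Φ₂)

lemma opToMat_mul {p : ℕ} (T U : EuclideanSpace ℂ (Fin p) →L[ℂ] EuclideanSpace ℂ (Fin p)) :
    opToMat (T * U) = opToMat T * opToMat U := map_mul _ _ _

lemma opToMat_add {p : ℕ} (T U : EuclideanSpace ℂ (Fin p) →L[ℂ] EuclideanSpace ℂ (Fin p)) :
    opToMat (T + U) = opToMat T + opToMat U := map_add _ _ _

lemma opToMat_smul {p : ℕ} (c : ℂ) (T : EuclideanSpace ℂ (Fin p) →L[ℂ] EuclideanSpace ℂ (Fin p)) :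
    opToMat (c • T) = c • opToMat T := map_smul _ _ _

lemma opToMat_adjoint {p : ℕ} (T : EuclideanSpace ℂ (Fin p) →L[ℂ] EuclideanSpace ℂ (Fin p)) :
    opToMat (adjoint T) = (opToMat T)ᴴ := by
  rw [← ContinuousLinearMap.star_eq_adjoint, ← Matrix.star_eq_conjTranspose]
  exact (Matrix.toEuclideanCLM (𝕜 := ℂ) (n := Fin p)).symm.map_star' T

set_option maxHeartbeats 1000000 in
/-- Block decomposition of the frame. -/
lemma frameS_eq_fromBlocks {p : ℕ} {H : Type*} [NormedAddCommGroup H]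
    [InnerProductSpace ℂ H] [CompleteSpace H] (A S : H →L[ℂ] H)
    (Φ₁ Φ₂ : EuclideanSpace ℂ (Fin p) →L[ℂ] H) (z : ℂ) :
    frameS A S Φ₁ Φ₂ z =
      Matrix.fromBlocks
        (1 - (Complex.I * z) • opToMat (adjoint Φ₁ ∘L
            (Ring.inverse (1 - z • adjoint A) ∘L Ring.inverse S) ∘L Φ₂))
        (-((Complex.I * z) • opToMat (adjoint Φ₁ ∘L
            (Ring.inverse (1 - z • adjoint A) ∘L Ring.inverse S) ∘L Φ₁)))
        (-((Complex.I * z) • opToMat (adjoint Φ₂ ∘L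
            (Ring.inverse (1 - z • adjoint A) ∘L Ring.inverse S) ∘L Φ₂)))
        (1 - (Complex.I * z) • opToMat (adjoint Φ₂ ∘L
            (Ring.inverse (1 - z • adjoint A) ∘L Ring.inverse S) ∘L Φ₁)) := by
  rw [frameS, sandwich, Matrix.fromBlocks_multiply, ← Matrix.fromBlocks_one,
    Matrix.fromBlocks_smul, sub_eq_add_neg, Matrix.fromBlocks_neg, Matrix.fromBlocks_add]
  simp only [Matrix.mul_one, Matrix.mul_zero, zero_add, add_zero,
    sub_eq_add_neg]

set_option maxHeartbeats 1600000 in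
/-- `ρ(z, conj z) = 𝔄₂₁(S,z) 𝔄₂₂(S,z)^* + 𝔄₂₂(S,z) 𝔄₂₁(S,z)^*`. -/
theorem rho_via_frame_blocks
    {p : ℕ} (hp : 1 ≤ p) {H : Type*} [NormedAddCommGroup H] [InnerProductSpace ℂ H]
    [CompleteSpace H] (A S : H →L[ℂ] H) (Φ₁ Φ₂ : EuclideanSpace ℂ (Fin p) →L[ℂ] H)
    (hS : IsSelfAdjoint S)
    (hnode : A ∘L S - S ∘L adjoint A =
      Complex.I • (Φ₁ ∘L adjoint Φ₂ + Φ₂ ∘L adjoint Φ₁))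
    (hSinv : IsUnit S) (z : ℂ)
    (hz : IsUnit ((1 : H →L[ℂ] H) - z • adjoint A)) :
    rhoS A S Φ₂ z (starRingEnd ℂ z) =
      (frameS A S Φ₁ Φ₂ z).toBlocks₂₁ * ((frameS A S Φ₁ Φ₂ z).toBlocks₂₂)ᴴ +
        (frameS A S Φ₁ Φ₂ z).toBlocks₂₂ * ((frameS A S Φ₁ Φ₂ z).toBlocks₂₁)ᴴ := by
  have h21 := congrArg Matrix.toBlocks₂₁ (frameS_eq_fromBlocks A S Φ₁ Φ₂ z)
  have h22 := congrArg Matrix.toBlocks₂₂ (frameS_eq_fromBlocks A S Φ₁ Φ₂ z)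
  rw [Matrix.toBlocks_fromBlocks₂₁] at h21
  rw [Matrix.toBlocks_fromBlocks₂₂] at h22
  rw [rhoS, h21, h22]
  set zc : ℂ := (starRingEnd ℂ) z with hzc
  set X : H →L[ℂ] H := 1 - z • adjoint A with hXdef
  set Y : H →L[ℂ] H := 1 - zc • A with hYdef
  set Si : H →L[ℂ] H := Ring.inverse S with hSidef
  set Bop : H →L[ℂ] H := Ring.inverse X ∘L Si with hBopdef
  set Top : EuclideanSpace ℂ (Fin p) →L[ℂ] EuclideanSpace ℂ (Fin p) :=
    adjoint Φ₂ ∘L Bop ∘L Φ₂ with hTopdef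
  set Uop : EuclideanSpace ℂ (Fin p) →L[ℂ] EuclideanSpace ℂ (Fin p) :=
    adjoint Φ₂ ∘L Bop ∘L Φ₁ with hUopdef
  set Bs : H →L[ℂ] H := Si ∘L Ring.inverse Y with hBsdef
  set Tsop : EuclideanSpace ℂ (Fin p) →L[ℂ] EuclideanSpace ℂ (Fin p) :=
    adjoint Φ₂ ∘L Bs ∘L Φ₂ with hTsopdef
  set Usop : EuclideanSpace ℂ (Fin p) →L[ℂ] EuclideanSpace ℂ (Fin p) :=
    adjoint Φ₁ ∘L Bs ∘L Φ₂ with hUsopdef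
  -- basic facts
  have hYX : Y = star X := by
    rw [hYdef, hXdef]
    simp [star_sub, star_smul, star_eq_adjoint, adjoint_adjoint, hzc]
  have hYu : IsUnit Y := by rw [hYX]; exact hz.star
  have hBop' : Bop = Ring.inverse X * Si := hBopdef
  have hBs' : Bs = Si * Ring.inverse Y := hBsdef
  have hstarS : star S = S := hS
  have hstarB : star Bop = Bs := by
    rw [hBop', StarMul.star_mul, hBs', hSidef, ← Ring.inverse_star, ← Ring.inverse_star,
      hstarS, ← hYX]
  have hSS : S * Si = 1 := Ring.mul_inverse_cancel _ hSinv
  have hSiS : Si * S = 1 := Ring.inverse_mul_cancel _ hSinv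
  have hnode' : A * S - S * adjoint A =
      Complex.I • (Φ₁ ∘L adjoint Φ₂ + Φ₂ ∘L adjoint Φ₁) := hnode
  -- the commutation identity for S⁻¹
  have hcomm : Si * A - adjoint A * Si =
      Complex.I • (Si * (Φ₁ ∘L adjoint Φ₂ + Φ₂ ∘L adjoint Φ₁) * Si) := by
    have e1 : Si * (A * S) * Si = Si * A := by
      rw [mul_assoc, mul_assoc, hSS, mul_one]
    have e2 : Si * (S * adjoint A) * Si = adjoint A * Si := by
      rw [← mul_assoc, hSiS, one_mul]
    have h := congrArg (fun T : H →L[ℂ] H => Si * T * Si) hnode'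
    simp only [mul_sub, sub_mul, mul_smul_comm, smul_mul_assoc] at h
    rw [e1, e2] at h
    exact h
  -- the W identity
  have hW : (-(Complex.I * z)) • (Si * Y) + (Complex.I * zc) • (X * Si) +
      (z * zc) • (Si * (Φ₁ ∘L adjoint Φ₂ + Φ₂ ∘L adjoint Φ₁) * Si) =
      (Complex.I * (zc - z)) • Si := by
    have hK : Si * (Φ₁ ∘L adjoint Φ₂ + Φ₂ ∘L adjoint Φ₁) * Si =
        (-Complex.I) • (Si * A - adjoint A * Si) := by
      rw [hcomm, smul_smul]
      simp
    rw [hK, hYdef, hXdef, mul_sub, mul_one, sub_mul, one_mul, mul_smul_comm,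
      smul_mul_assoc]
    module
  -- the key operator identity
  have hkey : (Complex.I * (zc - z)) • (Ring.inverse X * Si * Ring.inverse Y)
      = (-(Complex.I * z)) • Bop + (Complex.I * zc) • Bs +
        (z * zc) • (Bop * (Φ₁ ∘L adjoint Φ₂) * Bs + Bop * (Φ₂ ∘L adjoint Φ₁) * Bs) := by
    have h1 : Ring.inverse X * (Si * Y) * Ring.inverse Y = Bop := by
      rw [mul_assoc, mul_assoc, Ring.mul_inverse_cancel _ hYu, mul_one, hBop']
    have h2 : Ring.inverse X * (X * Si) * Ring.inverse Y = Bs := by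
      rw [← mul_assoc, Ring.inverse_mul_cancel _ hz, one_mul, hBs']
    have h3 : Ring.inverse X * (Si * (Φ₁ ∘L adjoint Φ₂ + Φ₂ ∘L adjoint Φ₁) * Si) *
        Ring.inverse Y =
        Bop * (Φ₁ ∘L adjoint Φ₂) * Bs + Bop * (Φ₂ ∘L adjoint Φ₁) * Bs := by
      rw [hBop', hBs']
      noncomm_ring
    rw [← h3, ← h1, ← h2]
    have h4 : ∀ (c : ℂ) (T : H →L[ℂ] H),
        c • (Ring.inverse X * T * Ring.inverse Y) =
          Ring.inverse X * (c • T) * Ring.inverse Y := by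
      intro c T; rw [mul_smul_comm, smul_mul_assoc]
    rw [h4, h4, h4, h4, ← hW]
    simp only [mul_add, add_mul]
  -- conjugate by Φ₂
  have hfin : (Complex.I * (zc - z)) • (adjoint Φ₂ ∘L Ring.inverse X ∘L Si ∘L
        Ring.inverse Y ∘L Φ₂)
      = (-(Complex.I * z)) • Top + (Complex.I * zc) • Tsop +
        (z * zc) • (Uop * Tsop + Top * Usop) := by
    have h := congrArg (fun T : H →L[ℂ] H => adjoint Φ₂ ∘L T ∘L Φ₂) hkey
    simp only [ContinuousLinearMap.add_comp, ContinuousLinearMap.comp_add,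
      ContinuousLinearMap.smul_comp, ContinuousLinearMap.comp_smul] at h
    have e2 : adjoint Φ₂ ∘L ((Bop * (Φ₁ ∘L adjoint Φ₂) * Bs) ∘L Φ₂) = Uop * Tsop := by
      rw [hUopdef, hTsopdef]; rfl
    have e3 : adjoint Φ₂ ∘L ((Bop * (Φ₂ ∘L adjoint Φ₁) * Bs) ∘L Φ₂) = Top * Usop := by
      rw [hTopdef, hUsopdef]; rfl
    rw [e2, e3] at h
    exact h
  -- adjoints of the blocks
  have hadjB : adjoint Bop = Bs := by
    rw [← ContinuousLinearMap.star_eq_adjoint]; exact hstarB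
  have hadjT : adjoint Top = Tsop := by
    rw [hTopdef, hTsopdef, ContinuousLinearMap.adjoint_comp,
      ContinuousLinearMap.adjoint_comp, ContinuousLinearMap.adjoint_adjoint, hadjB]
    rfl
  have hadjU : adjoint Uop = Usop := by
    rw [hUopdef, hUsopdef, ContinuousLinearMap.adjoint_comp,
      ContinuousLinearMap.adjoint_comp, ContinuousLinearMap.adjoint_adjoint, hadjB]
    rfl
  -- matrix versions
  have hMT : opToMat Tsop = (opToMat Top)ᴴ := by rw [← hadjT, opToMat_adjoint]
  have hMU : opToMat Usop = (opToMat Uop)ᴴ := by rw [← hadjU, opToMat_adjoint]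
  -- put everything together
  calc (Complex.I * (zc - z)) • opToMat (adjoint Φ₂ ∘L Ring.inverse X ∘L Si ∘L
          Ring.inverse Y ∘L Φ₂)
      = opToMat ((Complex.I * (zc - z)) • (adjoint Φ₂ ∘L Ring.inverse X ∘L Si ∘L
          Ring.inverse Y ∘L Φ₂)) := (opToMat_smul _ _).symm
    _ = opToMat ((-(Complex.I * z)) • Top + (Complex.I * zc) • Tsop +
          (z * zc) • (Uop * Tsop + Top * Usop)) := by rw [hfin]
    _ = (-(Complex.I * z)) • opToMat Top + (Complex.I * zc) • opToMat Tsop +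
          (z * zc) • (opToMat Uop * opToMat Tsop + opToMat Top * opToMat Usop) := by
        simp only [opToMat_add, opToMat_smul, opToMat_mul]
    _ = (-(Complex.I * z)) • opToMat Top + (Complex.I * zc) • (opToMat Top)ᴴ +
          (z * zc) • (opToMat Uop * (opToMat Top)ᴴ + opToMat Top * (opToMat Uop)ᴴ) := by
        rw [hMT, hMU]
    _ = (-((Complex.I * z) • opToMat Top)) * (1 - (Complex.I * z) • opToMat Uop)ᴴ +
          (1 - (Complex.I * z) • opToMat Uop) * (-((Complex.I * z) • opToMat Top))ᴴ := by
        have hstarc : star (Complex.I * z) = -(Complex.I * zc) := by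
          simp [star_mul', Complex.conj_I, hzc]
        rw [Matrix.conjTranspose_neg, Matrix.conjTranspose_sub,
          Matrix.conjTranspose_smul, Matrix.conjTranspose_smul,
          Matrix.conjTranspose_one, hstarc]
        simp only [mul_sub, sub_mul, mul_one, one_mul, neg_mul, mul_neg, neg_neg,
          smul_mul_assoc, mul_smul_comm, smul_smul]
        match_scalars <;> (try ring_nf) <;> simp [Complex.I_sq] <;> ring

end
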